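/- Let d = 2n and H = Σ_{i=1}^{2ℓ−2} P_i + 2E ∈ 𝔡_{n−ℓ+1}, with E = n_1 z_1 + ... + n_r z_r, the P_i and z_j distinct. Given a partition Σ of {P_1,...,P_{2ℓ−2}} into sets {p_1,...,p_ℓ} and {q_1,...,q_{ℓ−2}}, set x_i^Σ := p_i + Σ_j q_j + E. Then x_i^Σ ≤ H and, whenever ξ_𝔡 is defined at x_i^Σ, one has ξ_𝔡(x_i^Σ) = H. -/

import Mathlib

open Finsupp

/-- An effective divisor (ℕ-valued) viewed as an ordinary (ℤ-valued) divisor. -/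
noncomputable def effToZ {C : Type*} (F : C →₀ ℕ) : C →₀ ℤ :=
  F.mapRange (Nat.cast : ℕ → ℤ) Nat.cast_zero

/-- The stratum `𝔡_t` of a degree-`d` linear system `𝔡`. -/
def stratum {C : Type*} (𝔡 : Set (C →₀ ℕ)) (d t : ℕ) : Set (C →₀ ℕ) :=
  {F | F ∈ 𝔡 ∧ ∃ (P : Fin (d - 2 * t) → C) (Q : Fin t → C),
    F = (∑ i, single (P i) 1) + 2 • ∑ j, single (Q j) 1}

/-- let `d = 2n` and `H = Σ_{i=1}^{2ℓ-2} P i + 2E ∈ 𝔡_{n-ℓ+1}` with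
`E = Σ_j nn j • z j`, the `P i` and `z j` distinct.  A partition `σ` of
`{P 1, …, P (2ℓ-2)}` into `{p 1, …, p ℓ}` and `{q 1, …, q (ℓ-2)}` yields points
`x i ^ σ := p i + Σ_j q j + E ∈ C^(n)` with `x i ^ σ ≤ H`, and whenever `ξ_𝔡` is
defined at `x i ^ σ` its value there is `H`. -/
theorem partition_points_map_to_H
    {C : Type*} (Pic : Type*) [AddCommGroup Pic]
    (OC : (C →₀ ℤ) →+ Pic)
    (n ℓ : ℕ) (hℓ : 3 ≤ ℓ) (hn : ℓ - 1 ≤ n)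
    (η : Pic)
    (𝔡 : Set (C →₀ ℕ))
    (h𝔡 : ∀ G ∈ 𝔡, OC (effToZ G) = 2 • η)        -- 𝔡 ⊆ |η^⊗2|, of degree d = 2n
    (hdeg𝔡 : ∀ G ∈ 𝔡, (G.sum fun _ m => m) = 2 * n)
    (r : ℕ) (nn : Fin r → ℕ) (hnn : ∀ j, 0 < nn j)
    (z : Fin r → C) (P : Fin (2 * ℓ - 2) → C)
    (hdist : Function.Injective (Sum.elim P z))   -- the P i and z j are distinct
    (E : C →₀ ℕ) (hE : E = ∑ j, nn j • single (z j) 1)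
    (hdegE : (∑ j, nn j) = n + 1 - ℓ)             -- deg E = n - ℓ + 1
    (H : C →₀ ℕ) (hH : H = (∑ i, single (P i) 1) + 2 • E)
    (hH𝔡 : H ∈ 𝔡)                                 -- hence H ∈ 𝔡_{n-ℓ+1}
    -- the partition Σ of {P 1, …, P (2ℓ-2)} into ℓ and ℓ-2 points:
    (σ : Fin ℓ ⊕ Fin (ℓ - 2) ≃ Fin (2 * ℓ - 2))
    (x : Fin ℓ → (C →₀ ℕ))
    (hx : ∀ i, x i = single (P (σ (Sum.inl i))) 1 +
      (∑ j, single (P (σ (Sum.inr j))) 1) + E) :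
    ∀ i, x i ≤ H ∧
      ((∃! G, G ∈ 𝔡 ∧ x i ≤ G) →                  -- if ξ_𝔡 is defined at x i …
        ∀ G ∈ 𝔡, x i ≤ G → G = H) := by           -- … then ξ_𝔡 (x i) = H
  have key : ∀ i, x i ≤ H := by
    intro i
    rw [hx, hH]
    have hsum : (∑ k, single (P k) 1 : C →₀ ℕ) =
        (∑ i', single (P (σ (Sum.inl i'))) 1) + ∑ j, single (P (σ (Sum.inr j))) 1 := by
      rw [← Equiv.sum_comp σ (fun s => (single (P s) 1 : C →₀ ℕ)), Fintype.sum_sum_type]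
    rw [hsum, two_smul]
    have h1 : single (P (σ (Sum.inl i))) 1 ≤ ∑ i', single (P (σ (Sum.inl i'))) 1 :=
      Finset.single_le_sum (f := fun i' => (single (P (σ (Sum.inl i'))) 1 : C →₀ ℕ))
        (fun _ _ => zero_le) (Finset.mem_univ i)
    calc single (P (σ (Sum.inl i))) 1 + (∑ j, single (P (σ (Sum.inr j))) 1) + E
        ≤ (∑ i', single (P (σ (Sum.inl i'))) 1) + (∑ j, single (P (σ (Sum.inr j))) 1) + E :=
          add_le_add (add_le_add h1 le_rfl) le_rfl
      _ ≤ (∑ i', single (P (σ (Sum.inl i'))) 1) + (∑ j, single (P (σ (Sum.inr j))) 1)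
            + (E + E) := add_le_add le_rfl (le_add_self)
      _ = (∑ i', single (P (σ (Sum.inl i'))) 1) + (∑ j, single (P (σ (Sum.inr j))) 1)
            + (E + E) := rfl
  intro i
  refine ⟨key i, ?_⟩
  rintro ⟨G₀, hG₀, huniq⟩ G hG hxG
  rw [huniq G ⟨hG, hxG⟩, huniq H ⟨hH𝔡, key i⟩]
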